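/- arXiv:1907.08203 — 11 statements merged into one kernel-verified Lean document; each statement's English description precedes it below -/
import Mathlib

section
/- Let X be a nonempty set and (X, τ₁, …, τₙ) an n-topological space. Then the cardinality of KFₙ equals twice the cardinality of KFₙ⁰, i.e. #KFₙ = 2·#KFₙ⁰. -/
open Set

noncomputable section

/-- The closure operator of the topology `t`, as an element of the monoid
`Function.End (Set X)` of self-maps of the power set of `X` under composition. -/
def clOp {X : Type*} (t : TopologicalSpace X) : Function.End (Set X) := fun A => @closure X t A

/-- The interior operator of the topology `t`. -/
def intOp {X : Type*} (t : TopologicalSpace X) : Function.End (Set X) := fun A => @interior X t A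

/-- The frontier (topological boundary) operator of the topology `t`. -/
def frOp {X : Type*} (t : TopologicalSpace X) : Function.End (Set X) := fun A => @frontier X t A

/-- The set-complement operator. -/
def complOp {X : Type*} : Function.End (Set X) := fun A => Aᶜ

/-- An `n`-topological space: the topologies `τ 0 ⊇ τ 1 ⊇ ⋯ ⊇ τ (n-1)` are linearly
ordered by inclusion, with `τ 0` the finest: every `τ j`-open set is `τ i`-open
whenever `i ≤ j`. -/
def OrderedTop {X : Type*} {n : ℕ} (τ : Fin n → TopologicalSpace X) : Prop :=
  ∀ i j : Fin n, i ≤ j → ∀ U : Set X, (τ j).IsOpen U → (τ i).IsOpen U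

/-- Saturation: every nonempty `τ x`-open set has nonempty `τ y`-interior. -/
def SaturatedTop {X : Type*} {n : ℕ} (τ : Fin n → TopologicalSpace X) : Prop :=
  ∀ x y : Fin n, ∀ U : Set X, (τ x).IsOpen U → U.Nonempty → (@interior X (τ y) U).Nonempty

/-- `KFₙ⁰`: the submonoid of `Function.End (Set X)` generated by the closure,
interior and frontier operators of the topologies `τ j`. -/
def KF0 {X : Type*} {n : ℕ} (τ : Fin n → TopologicalSpace X) : Submonoid (Function.End (Set X)) :=
  Submonoid.closure (⋃ j : Fin n, {clOp (τ j), intOp (τ j), frOp (τ j)})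

/-- `KFₙ`: the submonoid of `Function.End (Set X)` generated by the closure and
frontier operators of the topologies `τ j` together with the complement operator. -/
def KF {X : Type*} {n : ℕ} (τ : Fin n → TopologicalSpace X) : Submonoid (Function.End (Set X)) :=
  Submonoid.closure ((⋃ j : Fin n, {clOp (τ j), frOp (τ j)}) ∪ {complOp})

/-- `p(n) = (5/24)n⁴ + (37/12)n³ + (79/24)n² + (101/12)n + 2`. -/
def pQ (n : ℕ) : ℚ :=
  5/24*(n:ℚ)^4 + 37/12*(n:ℚ)^3 + 79/24*(n:ℚ)^2 + 101/12*(n:ℚ) + 2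

/-- A saturated pair of topologies: every nonempty set open in either topology has
nonempty interior with respect to both. -/
def Saturated2 {X : Type*} (t1 t2 : TopologicalSpace X) : Prop :=
  ∀ U : Set X, (t1.IsOpen U ∨ t2.IsOpen U) → U.Nonempty →
    (@interior X t1 U).Nonempty ∧ (@interior X t2 U).Nonempty

/-- `KF₂⁰`: the submonoid generated by `{k₁, i₁, f₁, k₂, i₂, f₂}`. -/
def KF20 {X : Type*} (t1 t2 : TopologicalSpace X) : Submonoid (Function.End (Set X)) :=
  Submonoid.closure {clOp t1, intOp t1, frOp t1, clOp t2, intOp t2, frOp t2}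

/-- `KF₂`: the submonoid generated by `{k₁, f₁, k₂, f₂, c}`. -/
def KF2 {X : Type*} (t1 t2 : TopologicalSpace X) : Submonoid (Function.End (Set X)) :=
  Submonoid.closure {clOp t1, frOp t1, clOp t2, frOp t2, complOp}

section Aux

variable {X : Type*} {n : ℕ} (τ : Fin n → TopologicalSpace X)

lemma clOp_mem_KF0 (j : Fin n) : clOp (τ j) ∈ KF0 τ :=
  Submonoid.subset_closure (Set.mem_iUnion.2 ⟨j, by simp⟩)

lemma intOp_mem_KF0 (j : Fin n) : intOp (τ j) ∈ KF0 τ :=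
  Submonoid.subset_closure (Set.mem_iUnion.2 ⟨j, by simp⟩)

lemma frOp_mem_KF0 (j : Fin n) : frOp (τ j) ∈ KF0 τ :=
  Submonoid.subset_closure (Set.mem_iUnion.2 ⟨j, by simp⟩)

lemma clOp_mem_KF (j : Fin n) : clOp (τ j) ∈ KF τ :=
  Submonoid.subset_closure (Or.inl (Set.mem_iUnion.2 ⟨j, by simp⟩))

lemma frOp_mem_KF (j : Fin n) : frOp (τ j) ∈ KF τ :=
  Submonoid.subset_closure (Or.inl (Set.mem_iUnion.2 ⟨j, by simp⟩))

lemma complOp_mem_KF : complOp ∈ KF τ :=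
  Submonoid.subset_closure (Or.inr rfl)

lemma compl_mul_compl : (complOp : Function.End (Set X)) * complOp = 1 := by
  funext A; exact compl_compl A

lemma intOp_eq (t : TopologicalSpace X) :
    intOp t = complOp * clOp t * complOp := by
  funext A
  letI := t
  simp only [Function.End.mul_def, Function.comp_apply, intOp, complOp, clOp]
  show interior A = (closure (Aᶜ))ᶜ
  rw [closure_compl, compl_compl]

lemma clOp_mul_compl (t : TopologicalSpace X) :
    clOp t * complOp = complOp * intOp t := by
  funext A
  letI := t
  simp only [Function.End.mul_def, Function.comp_apply, intOp, complOp, clOp]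
  exact closure_compl

lemma frOp_mul_compl (t : TopologicalSpace X) :
    frOp t * complOp = frOp t := by
  funext A
  simp only [Function.End.mul_def, Function.comp_apply, frOp, complOp]
  exact @frontier_compl X t A

lemma KF0_le_KF : KF0 τ ≤ KF τ := by
  rw [KF0, Submonoid.closure_le]
  rintro x hx
  simp only [Set.mem_iUnion, Set.mem_insert_iff, Set.mem_singleton_iff] at hx
  obtain ⟨j, h | h | h⟩ := hx <;> subst h
  · exact clOp_mem_KF τ j
  · rw [intOp_eq]
    exact mul_mem (mul_mem (complOp_mem_KF τ) (clOp_mem_KF τ j)) (complOp_mem_KF τ)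
  · exact frOp_mem_KF τ j

lemma KF0_empty {g : Function.End (Set X)} (hg : g ∈ KF0 τ) : g ∅ = ∅ := by
  induction hg using Submonoid.closure_induction with
  | mem x hx =>
    simp only [Set.mem_iUnion, Set.mem_insert_iff, Set.mem_singleton_iff] at hx
    obtain ⟨j, h | h | h⟩ := hx <;> subst h
    · exact @closure_empty X (τ j)
    · exact @interior_empty X (τ j)
    · exact @frontier_empty X (τ j)
  | one => rfl
  | mul x y _ _ hx hy =>
    show x (y ∅) = ∅
    rw [hy, hx]

lemma KF_decomp {x : Function.End (Set X)} (hx : x ∈ KF τ) :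
    x ∈ KF0 τ ∨ ∃ g ∈ KF0 τ, x = complOp * g := by
  induction hx using Submonoid.closure_induction_left with
  | one => exact Or.inl (one_mem _)
  | mul_left s hs y hy ih =>
    simp only [Set.mem_union, Set.mem_iUnion, Set.mem_insert_iff,
      Set.mem_singleton_iff] at hs
    obtain ⟨j, h | h⟩ | h := hs
    · subst h
      rcases ih with hy0 | ⟨g, hg, rfl⟩
      · exact Or.inl (mul_mem (clOp_mem_KF0 τ j) hy0)
      · refine Or.inr ⟨intOp (τ j) * g, mul_mem (intOp_mem_KF0 τ j) hg, ?_⟩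
        rw [← mul_assoc, ← mul_assoc, clOp_mul_compl]
    · subst h
      rcases ih with hy0 | ⟨g, hg, rfl⟩
      · exact Or.inl (mul_mem (frOp_mem_KF0 τ j) hy0)
      · refine Or.inl ?_
        rw [← mul_assoc, frOp_mul_compl]
        exact mul_mem (frOp_mem_KF0 τ j) hg
    · subst h
      rcases ih with hy0 | ⟨g, hg, rfl⟩
      · exact Or.inr ⟨y, hy0, rfl⟩
      · refine Or.inl ?_
        rw [← mul_assoc, compl_mul_compl, one_mul]
        exact hg

end Aux

def eFun {X : Type*} {n : ℕ} (τ : Fin n → TopologicalSpace X) :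
    ↥(KF0 τ) ⊕ ↥(KF0 τ) → ↥(KF τ)
  | Sum.inl g => ⟨g.1, KF0_le_KF τ g.2⟩
  | Sum.inr g => ⟨complOp * g.1, mul_mem (complOp_mem_KF τ) (KF0_le_KF τ g.2)⟩

/-- in an `n`-topological space on a nonempty set `X`,
`#KFₙ = 2·#KFₙ⁰`. -/
theorem stmt_4 {X : Type*} [Nonempty X] {n : ℕ} (τ : Fin n → TopologicalSpace X)
    (hord : OrderedTop τ) :
    Cardinal.mk ↥(KF τ) = 2 * Cardinal.mk ↥(KF0 τ) := by
  classical
  have key : ∀ g ∈ KF0 τ, ∀ h ∈ KF0 τ, g ≠ complOp * h := by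
    intro g hg h hh hgh
    have h1 : g ∅ = (h ∅)ᶜ := congrFun hgh ∅
    rw [KF0_empty τ hg, KF0_empty τ hh, Set.compl_empty] at h1
    exact Set.empty_ne_univ h1
  have cancel : ∀ g h : Function.End (Set X), complOp * g = complOp * h → g = h := by
    intro g h hgh
    have h2 := congrArg (fun x => (complOp : Function.End (Set X)) * x) hgh
    simpa [← mul_assoc, compl_mul_compl] using h2
  have hinj : Function.Injective (eFun τ) := by
    rintro (g | g) (h | h) hgh
    · have h3 := congrArg Subtype.val hgh
      exact congrArg Sum.inl (Subtype.ext h3)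
    · have h3 := congrArg Subtype.val hgh
      exact (key g.1 g.2 h.1 h.2 h3).elim
    · have h3 := (congrArg Subtype.val hgh).symm
      exact (key h.1 h.2 g.1 g.2 h3).elim
    · have h3 := congrArg Subtype.val hgh
      exact congrArg Sum.inr (Subtype.ext (cancel _ _ h3))
  have hsurj : Function.Surjective (eFun τ) := by
    rintro ⟨x, hx⟩
    rcases KF_decomp τ hx with h | ⟨g, hg, rfl⟩
    · exact ⟨Sum.inl ⟨x, h⟩, rfl⟩
    · exact ⟨Sum.inr ⟨g, hg⟩, rfl⟩
  calc Cardinal.mk ↥(KF τ) = Cardinal.mk (↥(KF0 τ) ⊕ ↥(KF0 τ)) :=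
        (Cardinal.mk_congr (Equiv.ofBijective (eFun τ) ⟨hinj, hsurj⟩)).symm
    _ = Cardinal.mk ↥(KF0 τ) + Cardinal.mk ↥(KF0 τ) := by simp
    _ = 2 * Cardinal.mk ↥(KF0 τ) := (two_mul _).symm
end
end

section
/- Let (X, τ₁, …, τₙ) be a saturated n-topological space. Then for all 1 ≤ x, y ≤ n and every subset A ⊆ X, k_x(i_y A) = k_x(i_x A) and i_x(k_y A) = i_x(k_x A). -/
open Set

noncomputable section

theorem myMemClosureIff {X : Type*} (t : TopologicalSpace X) {s : Set X} {x : X} :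
    x ∈ @closure X t s ↔ ∀ o, t.IsOpen o → x ∈ o → (o ∩ s).Nonempty := by
  letI := t; exact mem_closure_iff

theorem myClosureMinimal {X : Type*} (t : TopologicalSpace X) {s u : Set X}
    (h : s ⊆ u) (h2 : @IsClosed X t u) : @closure X t s ⊆ u := by
  letI := t; exact closure_minimal h h2

theorem myIsClosedClosure {X : Type*} (t : TopologicalSpace X) {s : Set X} :
    @IsClosed X t (@closure X t s) := by letI := t; exact isClosed_closure

theorem myInteriorCompl {X : Type*} (t : TopologicalSpace X) {s : Set X} :
    @interior X t sᶜ = (@closure X t s)ᶜ := by letI := t; exact interior_compl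

theorem myInteriorMono {X : Type*} (t : TopologicalSpace X) {s u : Set X} (h : s ⊆ u) :
    @interior X t s ⊆ @interior X t u := by letI := t; exact interior_mono h

theorem myInteriorSubset {X : Type*} (t : TopologicalSpace X) {s : Set X} :
    @interior X t s ⊆ s := by letI := t; exact interior_subset

theorem myIsOpenInterior {X : Type*} (t : TopologicalSpace X) {s : Set X} :
    t.IsOpen (@interior X t s) := by letI := t; exact isOpen_interior

theorem myIsOpenInter {X : Type*} (t : TopologicalSpace X) {s u : Set X}
    (h1 : t.IsOpen s) (h2 : t.IsOpen u) : t.IsOpen (s ∩ u) := by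
  letI := t; exact IsOpen.inter h1 h2

theorem aux_sub {X : Type*} {n : ℕ} (τ : Fin n → TopologicalSpace X)
    (hord : OrderedTop τ) (hsat : SaturatedTop τ) (x y z : Fin n) (A : Set X) :
    @interior X (τ y) A ⊆ @closure X (τ x) (@interior X (τ z) A) := by
  intro p hp
  rw [myMemClosureIff (τ x)]
  intro o ho hpo
  have hUopen : (τ (min x y)).IsOpen (o ∩ @interior X (τ y) A) :=
    myIsOpenInter (τ (min x y)) (hord _ x (min_le_left _ _) o ho)
      (hord _ y (min_le_right _ _) _ (myIsOpenInterior (τ y)))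
  have hne : (o ∩ @interior X (τ y) A).Nonempty := ⟨p, hpo, hp⟩
  obtain ⟨q, hq⟩ := hsat (min x y) z _ hUopen hne
  refine ⟨q, (myInteriorSubset (τ z) hq).1, ?_⟩
  exact myInteriorMono (τ z) (fun r hr => myInteriorSubset (τ y) hr.2) hq

/-- in a saturated `n`-topological space, `kₓ(i_y A) = kₓ(iₓ A)` and
`iₓ(k_y A) = iₓ(kₓ A)` for all indices `x, y` and all `A ⊆ X`. -/
theorem stmt_5 {X : Type*} {n : ℕ} (τ : Fin n → TopologicalSpace X)
    (hord : OrderedTop τ) (hsat : SaturatedTop τ) (x y : Fin n) (A : Set X) :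
    @closure X (τ x) (@interior X (τ y) A) = @closure X (τ x) (@interior X (τ x) A) ∧
      @interior X (τ x) (@closure X (τ y) A) = @interior X (τ x) (@closure X (τ x) A) := by
  have key : ∀ u v : Fin n, ∀ B : Set X,
      @closure X (τ u) (@interior X (τ v) B) = @closure X (τ u) (@interior X (τ u) B) := by
    intro u v B
    apply subset_antisymm
    · exact myClosureMinimal (τ u) (aux_sub τ hord hsat u v u B) (myIsClosedClosure (τ u))
    · exact myClosureMinimal (τ u) (aux_sub τ hord hsat u u v B) (myIsClosedClosure (τ u))
  refine ⟨key x y A, ?_⟩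
  have hy : @closure X (τ y) A = (@interior X (τ y) Aᶜ)ᶜ := by
    rw [myInteriorCompl (τ y), compl_compl]
  have hx : @closure X (τ x) A = (@interior X (τ x) Aᶜ)ᶜ := by
    rw [myInteriorCompl (τ x), compl_compl]
  rw [hy, hx, myInteriorCompl (τ x), myInteriorCompl (τ x), key x y Aᶜ]
end
end

section
/- (IF Lemma) Let (X, τ₁, …, τₙ) be a saturated n-topological space. Then for all 1 ≤ x, y, z ≤ n and every subset A ⊆ X, i_x(f_y A) = i_x(f_z A); that is, the operator i_x f_y does not depend on the index y. -/
open Set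

noncomputable section

section Wrappers
variable {X : Type*}

lemma myIntSubset (t : TopologicalSpace X) (s : Set X) : @interior X t s ⊆ s := by
  letI := t; exact interior_subset

lemma myIntOpen (t : TopologicalSpace X) (s : Set X) : (t.IsOpen) (@interior X t s) := by
  letI := t; exact isOpen_interior

lemma myIntInt (t : TopologicalSpace X) (s : Set X) :
    @interior X t (@interior X t s) = @interior X t s := by
  letI := t; exact interior_interior

lemma myIntMono (t : TopologicalSpace X) {s u : Set X} (h : s ⊆ u) :
    @interior X t s ⊆ @interior X t u := by
  letI := t; exact interior_mono h

lemma myFrSub (t : TopologicalSpace X) (s : Set X) :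
    @frontier X t s ⊆ @closure X t s ∩ @closure X t sᶜ := by
  letI := t; rw [frontier_eq_closure_inter_closure]

lemma mySubCl (t : TopologicalSpace X) (s : Set X) : s ⊆ @closure X t s := by
  letI := t; exact subset_closure

lemma myClClosed (t : TopologicalSpace X) (s : Set X) : @IsClosed X t (@closure X t s) := by
  letI := t; exact isClosed_closure

lemma myInter (t : TopologicalSpace X) {s u : Set X} (hs : t.IsOpen s) (hu : t.IsOpen u) :
    t.IsOpen (s ∩ u) := by
  letI := t; exact IsOpen.inter hs hu

lemma dense_helper (t : TopologicalSpace X) (W S : Set X)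
    (h1 : (@interior X t W).Nonempty) (h2 : W ⊆ @closure X t S)
    (h3 : ∀ p ∈ W, p ∉ S) : False := by
  letI := t
  obtain ⟨q, hq⟩ := h1
  have hqc : q ∈ closure S := h2 (interior_subset hq)
  rw [mem_closure_iff] at hqc
  obtain ⟨r, hr, hrS⟩ := hqc _ isOpen_interior hq
  exact h3 r (interior_subset hr) hrS

end Wrappers

lemma stmt_6_sub {X : Type*} {n : ℕ} (τ : Fin n → TopologicalSpace X)
    (hord : OrderedTop τ) (hsat : SaturatedTop τ) (x y z : Fin n) (A : Set X) :
    @interior X (τ x) (@frontier X (τ y) A) ⊆ @frontier X (τ z) A := by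
  intro p hp
  by_contra hpf
  set U := @interior X (τ x) (@frontier X (τ y) A) with hUdef
  have hUsub : U ⊆ @frontier X (τ y) A := myIntSubset (τ x) _
  set m := min x z with hm
  have hUm : (τ m).IsOpen U := hord m x (min_le_left x z) U (myIntOpen (τ x) _)
  by_cases hc : p ∈ @closure X (τ z) A
  · have hpi : p ∈ @interior X (τ z) A := by
      by_contra hpi
      exact hpf ⟨hc, hpi⟩
    set V := @interior X (τ z) A with hV
    have hVm : (τ m).IsOpen V := hord m z (min_le_right x z) V (myIntOpen (τ z) _)
    set W := U ∩ V with hW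
    have hWm : (τ m).IsOpen W := myInter (τ m) hUm hVm
    have hWne : W.Nonempty := ⟨p, hp, hpi⟩
    have hint : (@interior X (τ y) W).Nonempty := hsat m y W hWm hWne
    refine dense_helper (τ y) W Aᶜ hint ?_ ?_
    · intro q hq
      exact (myFrSub (τ y) A (hUsub hq.1)).2
    · intro q hq hqA
      exact hqA (myIntSubset (τ z) A hq.2)
  · set V := (@closure X (τ z) A)ᶜ with hV
    have hVm : (τ m).IsOpen V :=
      hord m z (min_le_right x z) V (myClClosed (τ z) A).isOpen_compl
    set W := U ∩ V with hW
    have hWm : (τ m).IsOpen W := myInter (τ m) hUm hVm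
    have hWne : W.Nonempty := ⟨p, hp, hc⟩
    have hint : (@interior X (τ y) W).Nonempty := hsat m y W hWm hWne
    refine dense_helper (τ y) W A hint ?_ ?_
    · intro q hq
      exact (myFrSub (τ y) A (hUsub hq.1)).1
    · intro q hq hqA
      exact hq.2 (mySubCl (τ z) A hqA)

/-- IF Lemma: in a saturated `n`-topological space,
`iₓ(f_y A) = iₓ(f_z A)` for all indices `x, y, z` and all `A ⊆ X`. -/
theorem stmt_6 {X : Type*} {n : ℕ} (τ : Fin n → TopologicalSpace X)
    (hord : OrderedTop τ) (hsat : SaturatedTop τ) (x y z : Fin n) (A : Set X) :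
    @interior X (τ x) (@frontier X (τ y) A) = @interior X (τ x) (@frontier X (τ z) A) := by
  apply subset_antisymm
  · calc @interior X (τ x) (@frontier X (τ y) A)
        = @interior X (τ x) (@interior X (τ x) (@frontier X (τ y) A)) :=
          (myIntInt (τ x) _).symm
      _ ⊆ @interior X (τ x) (@frontier X (τ z) A) :=
          myIntMono (τ x) (stmt_6_sub τ hord hsat x y z A)
  · calc @interior X (τ x) (@frontier X (τ z) A)
        = @interior X (τ x) (@interior X (τ x) (@frontier X (τ z) A)) :=
          (myIntInt (τ x) _).symm
      _ ⊆ @interior X (τ x) (@frontier X (τ y) A) :=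
          myIntMono (τ x) (stmt_6_sub τ hord hsat x z y A)
end
end

section
/- (FK Lemma) Let (X, τ₁, …, τₙ) be a saturated n-topological space. Then for all 1 ≤ x, y ≤ n and every subset A ⊆ X, f_x(k_y A) = f_x(k_{max(x,y)} A). -/
open Set

noncomputable section

theorem stmt7_aux {X : Type*} {n : ℕ} (τ : Fin n → TopologicalSpace X)
    (hord : OrderedTop τ) (hsat : SaturatedTop τ) {x y : Fin n} (hyx : y ≤ x) (A : Set X) :
    @frontier X (τ x) (@closure X (τ y) A) = @frontier X (τ x) (@closure X (τ x) A) := by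
  set B := @closure X (τ y) A with hB
  set C := @closure X (τ x) A with hC
  have hAB : A ⊆ B := @subset_closure X (τ y) A
  have hCc : @IsClosed X (τ y) C := by
    rw [← @isOpen_compl_iff X C (τ y)]
    exact hord y x hyx _ ((@isOpen_compl_iff X C (τ x)).mpr (@isClosed_closure X (τ x) A))
  have hBC : B ⊆ C := @closure_minimal X (τ y) _ _ (@subset_closure X (τ x) A) hCc
  have hkB : @closure X (τ x) B = C := by
    apply subset_antisymm
    · exact @closure_minimal X (τ x) _ _ hBC (@isClosed_closure X (τ x) A)
    · exact @closure_mono X (τ x) _ _ hAB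
  have hint : @interior X (τ x) C ⊆ B := by
    by_contra h
    rw [Set.not_subset] at h
    obtain ⟨p, hpC, hpB⟩ := h
    set U := @interior X (τ x) C ∩ Bᶜ with hU
    have h1 : (τ y).IsOpen (@interior X (τ x) C) :=
      hord y x hyx _ (@isOpen_interior X (τ x) C)
    have h2 : (τ y).IsOpen Bᶜ := (@isOpen_compl_iff X B (τ y)).mpr (@isClosed_closure X (τ y) A)
    have hUopen : (τ y).IsOpen U := @IsOpen.inter X (τ y) _ _ h1 h2
    obtain ⟨q, hq⟩ := hsat y x U hUopen ⟨p, hpC, hpB⟩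
    have hqC : q ∈ C := by
      have hqU : q ∈ U := @interior_subset X (τ x) U _ hq
      exact @interior_subset X (τ x) C _ hqU.1
    rw [hC, @mem_closure_iff X (τ x) q A] at hqC
    obtain ⟨r, hr, hrA⟩ := hqC (@interior X (τ x) U) (@isOpen_interior X (τ x) U) hq
    exact (@interior_subset X (τ x) U _ hr).2 (hAB hrA)
  have hintEq : @interior X (τ x) B = @interior X (τ x) C := by
    apply subset_antisymm
    · exact @interior_mono X (τ x) _ _ hBC
    · exact @interior_maximal X (τ x) _ _ hint (@isOpen_interior X (τ x) C)
  show @closure X (τ x) B \ @interior X (τ x) B = @closure X (τ x) C \ @interior X (τ x) C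
  rw [hkB, hintEq, hC, @closure_closure X (τ x) A]

/-- FK Lemma: in a saturated `n`-topological space,
`fₓ(k_y A) = fₓ(k_{max(x,y)} A)` for all indices `x, y` and all `A ⊆ X`. -/
theorem stmt_7 {X : Type*} {n : ℕ} (τ : Fin n → TopologicalSpace X)
    (hord : OrderedTop τ) (hsat : SaturatedTop τ) (x y : Fin n) (A : Set X) :
    @frontier X (τ x) (@closure X (τ y) A) =
      @frontier X (τ x) (@closure X (τ (max x y)) A) := by
  rcases le_total x y with h | h
  · rw [max_eq_right h]
  · rw [max_eq_left h]
    exact stmt7_aux τ hord hsat h A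
end
end

section
/- (FI Lemma) Let (X, τ₁, …, τₙ) be a saturated n-topological space. Then for all 1 ≤ x, y ≤ n and every subset A ⊆ X, f_x(i_y A) = f_x(i_{max(x,y)} A). -/
open Set

noncomputable section

/-- FI Lemma: in a saturated `n`-topological space,
`fₓ(i_y A) = fₓ(i_{max(x,y)} A)` for all indices `x, y` and all `A ⊆ X`. -/
theorem stmt_8 {X : Type*} {n : ℕ} (τ : Fin n → TopologicalSpace X)
    (hord : OrderedTop τ) (hsat : SaturatedTop τ) (x y : Fin n) (A : Set X) :
    @frontier X (τ x) (@interior X (τ y) A) =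
      @frontier X (τ x) (@interior X (τ (max x y)) A) := by
  rcases le_total x y with hxy | hyx
  · rw [max_eq_right hxy]
  · rw [max_eq_left hyx]
    have hsub : @interior X (τ x) A ⊆ @interior X (τ y) A :=
      @interior_maximal X (τ y) A _ (@interior_subset X (τ x) A)
        (hord y x hyx _ (@isOpen_interior X (τ x) A))
    have hint : @interior X (τ x) (@interior X (τ y) A)
        = @interior X (τ x) (@interior X (τ x) A) := by
      rw [@interior_interior X (τ x) A]
      refine le_antisymm ?_ ?_
      · exact @interior_mono X (τ x) _ A (@interior_subset X (τ y) A)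
      · exact @interior_maximal X (τ x) _ _ hsub (@isOpen_interior X (τ x) A)
    have hcl : @closure X (τ x) (@interior X (τ y) A)
        = @closure X (τ x) (@interior X (τ x) A) := by
      refine le_antisymm ?_ (@closure_mono X (τ x) _ _ hsub)
      refine @closure_minimal X (τ x) _ _ ?_ (@isClosed_closure X (τ x) _)
      intro p hp
      rw [@mem_closure_iff X (τ x) p _]
      intro U hU hpU
      have hUo : (τ y).IsOpen (U ∩ @interior X (τ y) A) :=
        @IsOpen.inter X (τ y) U _ (hord y x hyx U hU) (@isOpen_interior X (τ y) A)
      obtain ⟨q, hq⟩ := hsat y x _ hUo ⟨p, hpU, hp⟩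
      have hqsub : @interior X (τ x) (U ∩ @interior X (τ y) A) ⊆ U ∩ @interior X (τ x) A := by
        intro r hr
        have hr1 := @interior_subset X (τ x) (U ∩ @interior X (τ y) A) r hr
        refine ⟨hr1.1, ?_⟩
        have hA : @interior X (τ x) (U ∩ @interior X (τ y) A) ⊆ A :=
          fun s hs => @interior_subset X (τ y) A s (@interior_subset X (τ x) (U ∩ @interior X (τ y) A) s hs).2
        exact @interior_maximal X (τ x) A _ hA (@isOpen_interior X (τ x) _) r hr
      exact ⟨q, (hqsub hq).1, (hqsub hq).2⟩
    unfold frontier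
    rw [hint, hcl]
end
end

section
/- (FIKI/FKIK/FKIF Lemma) Let (X, τ₁, …, τₙ) be a saturated n-topological space and let 1 ≤ y ≤ x ≤ n. Then for all 1 ≤ z, w ≤ n and every subset A ⊆ X: f_x(i_y(k_z(i_w A))) = f_x(k_x(i_x A)); f_x(k_y(i_z(k_w A))) = f_x(i_x(k_x A)); and f_x(k_y(i_z(f_w A))) = f_x(i_x(f_x A)). -/
open Set

noncomputable section

section single
variable {X : Type*} [TopologicalSpace X] (A : Set X)

lemma my_ikik : interior (closure (interior (closure A))) = interior (closure A) := by
  apply subset_antisymm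
  · exact interior_mono (closure_minimal interior_subset isClosed_closure)
  · exact interior_maximal subset_closure isOpen_interior

lemma my_kiki : closure (interior (closure (interior A))) = closure (interior A) := by
  apply subset_antisymm
  · exact closure_minimal interior_subset isClosed_closure
  · exact closure_mono (interior_maximal subset_closure isOpen_interior)

lemma my_int_fr : interior (frontier A) = interior (closure A) ∩ (closure (interior A))ᶜ := by
  rw [frontier_eq_closure_inter_closure, interior_inter, closure_compl, interior_compl]

lemma my_int_fr_reg :
    interior (closure (interior (frontier A))) = interior (frontier A) := by
  apply subset_antisymm
  · have h1 : interior (closure (interior (frontier A)))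
        ⊆ interior (closure (interior (closure A))) :=
      interior_mono (closure_mono (interior_mono frontier_subset_closure))
    rw [my_ikik] at h1
    have h2 : interior (frontier A) ⊆ (closure (interior A))ᶜ := by
      rw [my_int_fr]; exact inter_subset_right
    have h3 : interior (closure (interior (frontier A)))
        ⊆ interior (closure ((closure (interior A))ᶜ)) :=
      interior_mono (closure_mono h2)
    rw [closure_compl, interior_compl, my_kiki] at h3
    conv_rhs => rw [my_int_fr]
    exact subset_inter h1 h3
  · exact interior_maximal subset_closure isOpen_interior

end single

lemma fr_congr {X : Type*} (t : TopologicalSpace X) {S T : Set X}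
    (hk : @closure X t S = @closure X t T) (hi : @interior X t S = @interior X t T) :
    @frontier X t S = @frontier X t T := by
  letI := t
  show closure S \ interior S = closure T \ interior T
  rw [hk, hi]


section multi
variable {X : Type*} {n : ℕ} {τ : Fin n → TopologicalSpace X}

lemma sub_cl_int (hord : OrderedTop τ) (hsat : SaturatedTop τ) (a b c : Fin n) (B : Set X) :
    @interior X (τ b) B ⊆ @closure X (τ a) (@interior X (τ c) B) := by
  intro p hp
  rw [@mem_closure_iff X (τ a) p _]
  intro V hV hpV
  have hopen : (τ (min a b)).IsOpen (V ∩ @interior X (τ b) B) :=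
    @IsOpen.inter X (τ (min a b)) V (@interior X (τ b) B)
      (hord (min a b) a (min_le_left a b) V hV)
      (hord (min a b) b (min_le_right a b) _ (@isOpen_interior X (τ b) B))
  obtain ⟨q, hq⟩ := hsat (min a b) c _ hopen ⟨p, hpV, hp⟩
  have hsub : V ∩ @interior X (τ b) B ⊆ B := fun r hr => @interior_subset X (τ b) B _ hr.2
  refine ⟨q, (@interior_subset X (τ c) (V ∩ @interior X (τ b) B) _ hq).1, ?_⟩
  exact @interior_mono X (τ c) (V ∩ @interior X (τ b) B) B hsub _ hq

lemma cl_int_congr (hord : OrderedTop τ) (hsat : SaturatedTop τ) (a b c : Fin n) (B : Set X) :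
    @closure X (τ a) (@interior X (τ b) B) = @closure X (τ a) (@interior X (τ c) B) :=
  subset_antisymm
    (@closure_minimal X (τ a) _ _ (sub_cl_int hord hsat a b c B) (@isClosed_closure X (τ a) _))
    (@closure_minimal X (τ a) _ _ (sub_cl_int hord hsat a c b B) (@isClosed_closure X (τ a) _))

lemma int_cl_congr (hord : OrderedTop τ) (hsat : SaturatedTop τ) (a b c : Fin n) (B : Set X) :
    @interior X (τ a) (@closure X (τ b) B) = @interior X (τ a) (@closure X (τ c) B) := by
  rw [@closure_eq_compl_interior_compl X (τ b) B, @closure_eq_compl_interior_compl X (τ c) B,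
    @interior_compl X (τ a) _, @interior_compl X (τ a) _,
    cl_int_congr hord hsat a b c Bᶜ]

lemma cl_le_cl (hord : OrderedTop τ) {x y : Fin n} (hyx : y ≤ x) (B : Set X) :
    @closure X (τ y) B ⊆ @closure X (τ x) B := by
  refine @closure_minimal X (τ y) _ _ (@subset_closure X (τ x) B) ?_
  rw [← @isOpen_compl_iff X _ (τ y)]
  exact hord y x hyx _ ((@isOpen_compl_iff X _ (τ x)).mpr (@isClosed_closure X (τ x) B))

lemma int_le_int (hord : OrderedTop τ) {x y : Fin n} (hyx : y ≤ x) (B : Set X) :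
    @interior X (τ x) B ⊆ @interior X (τ y) B :=
  @interior_maximal X (τ y) _ _ (@interior_subset X (τ x) B)
    (hord y x hyx _ (@isOpen_interior X (τ x) B))

lemma int_int_eq (hord : OrderedTop τ) {x y : Fin n} (hyx : y ≤ x) (B : Set X) :
    @interior X (τ x) (@interior X (τ y) B) = @interior X (τ x) B :=
  subset_antisymm
    (@interior_mono X (τ x) _ _ (@interior_subset X (τ y) B))
    (@interior_maximal X (τ x) _ _ (int_le_int hord hyx B) (@isOpen_interior X (τ x) B))

lemma int_fr_congr (hord : OrderedTop τ) (hsat : SaturatedTop τ) (a b c : Fin n) (B : Set X) :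
    @interior X (τ a) (@frontier X (τ b) B) = @interior X (τ a) (@frontier X (τ c) B) := by
  rw [@frontier_eq_closure_inter_closure X (τ b) B, @frontier_eq_closure_inter_closure X (τ c) B,
    @interior_inter X (τ a) _ _, @interior_inter X (τ a) _ _,
    int_cl_congr hord hsat a b c B, int_cl_congr hord hsat a b c Bᶜ]

lemma fiki (hord : OrderedTop τ) (hsat : SaturatedTop τ) (x y : Fin n) (hyx : y ≤ x)
    (z w : Fin n) (A : Set X) :
    @frontier X (τ x) (@interior X (τ y) (@closure X (τ z) (@interior X (τ w) A))) =
      @frontier X (τ x) (@closure X (τ x) (@interior X (τ x) A)) := by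
  have e1 : @interior X (τ y) (@closure X (τ z) (@interior X (τ w) A))
      = @interior X (τ y) (@closure X (τ y) (@interior X (τ y) A)) := by
    rw [int_cl_congr hord hsat y z y (@interior X (τ w) A),
      cl_int_congr hord hsat y w y A]
  rw [e1]
  have hDS : @interior X (τ y) A
      ⊆ @interior X (τ y) (@closure X (τ y) (@interior X (τ y) A)) :=
    @interior_maximal X (τ y) _ _ (@subset_closure X (τ y) _) (@isOpen_interior X (τ y) A)
  apply fr_congr (τ x)
  · calc @closure X (τ x) (@interior X (τ y) (@closure X (τ y) (@interior X (τ y) A)))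
        = @closure X (τ x) (@interior X (τ y) A) := by
          apply subset_antisymm
          · refine @closure_minimal X (τ x) _ _ ?_ (@isClosed_closure X (τ x) _)
            exact (@interior_subset X (τ y) _).trans (cl_le_cl hord hyx _)
          · exact @closure_mono X (τ x) _ _ hDS
      _ = @closure X (τ x) (@interior X (τ x) A) := cl_int_congr hord hsat x y x A
      _ = @closure X (τ x) (@closure X (τ x) (@interior X (τ x) A)) :=
          (@closure_closure X (τ x) _).symm
  · calc @interior X (τ x) (@interior X (τ y) (@closure X (τ y) (@interior X (τ y) A)))
        = @interior X (τ x) (@closure X (τ y) (@interior X (τ y) A)) := int_int_eq hord hyx _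
      _ = @interior X (τ x) (@closure X (τ x) (@interior X (τ y) A)) :=
          int_cl_congr hord hsat x y x _
      _ = @interior X (τ x) (@closure X (τ x) (@interior X (τ x) A)) := by
          rw [cl_int_congr hord hsat x y x A]

lemma fkik (hord : OrderedTop τ) (hsat : SaturatedTop τ) (x y : Fin n) (hyx : y ≤ x)
    (z w : Fin n) (A : Set X) :
    @frontier X (τ x) (@closure X (τ y) (@interior X (τ z) (@closure X (τ w) A))) =
      @frontier X (τ x) (@interior X (τ x) (@closure X (τ x) A)) := by
  have ec : @closure X (τ y) (@interior X (τ z) (@closure X (τ w) A))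
      = (@interior X (τ y) (@closure X (τ z) (@interior X (τ w) Aᶜ)))ᶜ := by
    rw [@closure_eq_compl_interior_compl X (τ w) A, @interior_compl X (τ z) _,
      @closure_compl X (τ y) _]
  rw [ec, @frontier_compl X (τ x), fiki hord hsat x y hyx z w Aᶜ,
    @interior_compl X (τ x) _, @closure_compl X (τ x) _, @frontier_compl X (τ x)]

lemma fkif (hord : OrderedTop τ) (hsat : SaturatedTop τ) (x y : Fin n) (hyx : y ≤ x)
    (z w : Fin n) (A : Set X) :
    @frontier X (τ x) (@closure X (τ y) (@interior X (τ z) (@frontier X (τ w) A))) =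
      @frontier X (τ x) (@interior X (τ x) (@frontier X (τ x) A)) := by
  rw [int_fr_congr hord hsat z w x A]
  apply fr_congr (τ x)
  · calc @closure X (τ x) (@closure X (τ y) (@interior X (τ z) (@frontier X (τ x) A)))
        = @closure X (τ x) (@interior X (τ z) (@frontier X (τ x) A)) := by
          apply subset_antisymm
          · exact @closure_minimal X (τ x) _ _ (cl_le_cl hord hyx _) (@isClosed_closure X (τ x) _)
          · exact @closure_mono X (τ x) _ _ (@subset_closure X (τ y) _)
      _ = @closure X (τ x) (@interior X (τ x) (@frontier X (τ x) A)) :=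
          cl_int_congr hord hsat x z x _
  · calc @interior X (τ x) (@closure X (τ y) (@interior X (τ z) (@frontier X (τ x) A)))
        = @interior X (τ x) (@closure X (τ x) (@interior X (τ z) (@frontier X (τ x) A))) :=
          int_cl_congr hord hsat x y x _
      _ = @interior X (τ x) (@closure X (τ x) (@interior X (τ x) (@frontier X (τ x) A))) := by
          rw [cl_int_congr hord hsat x z x (@frontier X (τ x) A)]
      _ = @interior X (τ x) (@frontier X (τ x) A) := @my_int_fr_reg X (τ x) A
      _ = @interior X (τ x) (@interior X (τ x) (@frontier X (τ x) A)) :=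
          (@interior_interior X (τ x) _).symm

end multi

/-- FIKI/FKIK/FKIF Lemma: in a saturated `n`-topological space,
for `y ≤ x` and all indices `z, w` and all `A ⊆ X`:
`fₓ(i_y(k_z(i_w A))) = fₓ(kₓ(iₓ A))`, `fₓ(k_y(i_z(k_w A))) = fₓ(iₓ(kₓ A))`, and
`fₓ(k_y(i_z(f_w A))) = fₓ(iₓ(fₓ A))`. -/
theorem stmt_10 {X : Type*} {n : ℕ} (τ : Fin n → TopologicalSpace X)
    (hord : OrderedTop τ) (hsat : SaturatedTop τ) (x y : Fin n) (hyx : y ≤ x)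
    (z w : Fin n) (A : Set X) :
    (@frontier X (τ x) (@interior X (τ y) (@closure X (τ z) (@interior X (τ w) A))) =
        @frontier X (τ x) (@closure X (τ x) (@interior X (τ x) A))) ∧
      (@frontier X (τ x) (@closure X (τ y) (@interior X (τ z) (@closure X (τ w) A))) =
        @frontier X (τ x) (@interior X (τ x) (@closure X (τ x) A))) ∧
      (@frontier X (τ x) (@closure X (τ y) (@interior X (τ z) (@frontier X (τ w) A))) =
        @frontier X (τ x) (@interior X (τ x) (@frontier X (τ x) A))) := by
  exact ⟨fiki hord hsat x y hyx z w A, fkik hord hsat x y hyx z w A,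
    fkif hord hsat x y hyx z w A⟩
end
end

section
/- (FFK/FFI/FFF Lemma) Let (X, τ₁, …, τₙ) be a saturated n-topological space. Then for all 1 ≤ x, y, z ≤ n and every subset A ⊆ X: f_x(f_y(k_z A)) = k_x(f_y(k_z A)), f_x(f_y(i_z A)) = k_x(f_y(i_z A)), and f_x(f_y(f_z A)) = k_x(f_y(f_z A)); moreover, if x ≤ y these sets equal f_y(k_z A), f_y(i_z A), and f_y(f_z A), respectively. -/
open Set

noncomputable section

/-- Key lemma: if `Sᶜ` is `τ z`-open (i.e. `S` is `τ z`-closed), then no nonempty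
`τ y`-open set is contained in the `τ y`-frontier of `S`. -/
lemma keyA {X : Type*} {n : ℕ} (τ : Fin n → TopologicalSpace X)
    (hord : OrderedTop τ) (hsat : SaturatedTop τ) (y z : Fin n) (S : Set X)
    (hS : (τ z).IsOpen Sᶜ) (W : Set X) (hW : (τ y).IsOpen W)
    (hsub : W ⊆ @frontier X (τ y) S) : W = ∅ := by
  letI : TopologicalSpace X := τ y
  by_contra h
  obtain ⟨w, hw⟩ := Set.nonempty_iff_ne_empty.mpr h
  have hwf : w ∈ closure S ∩ closure Sᶜ := by
    rw [← frontier_eq_closure_inter_closure]; exact hsub hw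
  rcases le_total y z with hyz | hzy
  · -- S is τ_y-closed, so frontier_y S ⊆ S; but W meets Sᶜ
    have hSclosed : IsClosed S := ⟨hord y z hyz _ hS⟩
    have hWS : W ⊆ S := fun u hu => by
      have h1 : u ∈ closure S := frontier_subset_closure (hsub hu)
      rwa [hSclosed.closure_eq] at h1
    obtain ⟨u, huW, huSc⟩ := mem_closure_iff.mp hwf.2 W hW hw
    exact huSc (hWS huW)
  · -- τ_y-open sets are τ_z-open
    have hWz : (τ z).IsOpen W := hord z y hzy _ hW
    have hne : (W ∩ Sᶜ).Nonempty := mem_closure_iff.mp hwf.2 W hW hw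
    have hopen : (τ z).IsOpen (W ∩ Sᶜ) := (τ z).isOpen_inter _ _ hWz hS
    obtain ⟨v, hv⟩ := hsat z y _ hopen hne
    have hvW : v ∈ W := (interior_subset hv).1
    have hvcl : v ∈ closure S := (by
      have := hsub hvW
      rw [frontier_eq_closure_inter_closure] at this
      exact this.1)
    obtain ⟨u, huI, huS⟩ := mem_closure_iff.mp hvcl _ isOpen_interior hv
    exact (interior_subset huI).2 huS

lemma keyA' {X : Type*} {n : ℕ} (τ : Fin n → TopologicalSpace X)
    (hord : OrderedTop τ) (hsat : SaturatedTop τ) (y z : Fin n) (S : Set X)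
    (hS : (τ z).IsOpen S ∨ (τ z).IsOpen Sᶜ) (W : Set X) (hW : (τ y).IsOpen W)
    (hsub : W ⊆ @frontier X (τ y) S) : W = ∅ := by
  rcases hS with hS | hS
  · apply keyA τ hord hsat y z Sᶜ (by rwa [compl_compl]) W hW
    rwa [@frontier_compl X (τ y) S]
  · exact keyA τ hord hsat y z S hS W hW hsub

/-- If `S` is `τ z`-open or `τ z`-closed, the `τ x`-interior of the `τ y`-frontier
of `S` is empty. -/
lemma keyInt {X : Type*} {n : ℕ} (τ : Fin n → TopologicalSpace X)
    (hord : OrderedTop τ) (hsat : SaturatedTop τ) (x y z : Fin n) (S : Set X)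
    (hS : (τ z).IsOpen S ∨ (τ z).IsOpen Sᶜ) :
    @interior X (τ x) (@frontier X (τ y) S) = ∅ := by
  by_contra h
  have hne : (@interior X (τ x) (@frontier X (τ y) S)).Nonempty :=
    Set.nonempty_iff_ne_empty.mpr h
  obtain ⟨v, hv⟩ := hsat x y _ (@isOpen_interior X (τ x) _) hne
  have hWe := keyA' τ hord hsat y z S hS _ (@isOpen_interior X (τ y) _)
    (fun u hu => (@interior_subset X (τ x) _) ((@interior_subset X (τ y) _) hu))
  rw [hWe] at hv
  exact hv

/-- If `S` is `τ z`-open or `τ z`-closed, then `f_x (f_y S) = k_x (f_y S)`,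
and if `x ≤ y` these equal `f_y S`. -/
lemma keyMain {X : Type*} {n : ℕ} (τ : Fin n → TopologicalSpace X)
    (hord : OrderedTop τ) (hsat : SaturatedTop τ) (x y z : Fin n) (S : Set X)
    (hS : (τ z).IsOpen S ∨ (τ z).IsOpen Sᶜ) :
    @frontier X (τ x) (@frontier X (τ y) S) = @closure X (τ x) (@frontier X (τ y) S) ∧
    (x ≤ y → @frontier X (τ x) (@frontier X (τ y) S) = @frontier X (τ y) S) := by
  have hint := keyInt τ hord hsat x y z S hS
  have hfr : @frontier X (τ x) (@frontier X (τ y) S)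
      = @closure X (τ x) (@frontier X (τ y) S) := by
    have h0 : @frontier X (τ x) (@frontier X (τ y) S)
        = @closure X (τ x) (@frontier X (τ y) S)
          \ @interior X (τ x) (@frontier X (τ y) S) := rfl
    rw [h0, hint, Set.diff_empty]
  refine ⟨hfr, fun hxy => ?_⟩
  letI : TopologicalSpace X := τ x
  have hclosed : IsClosed (@frontier X (τ y) S) :=
    ⟨hord x y hxy _ (@isClosed_frontier X (τ y) _).isOpen_compl⟩
  rw [hfr]
  exact hclosed.closure_eq

/-- FFK/FFI/FFF Lemma: in a saturated `n`-topological space, for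
all indices `x, y, z` and all `A ⊆ X`: `fₓ(f_y(k_z A)) = kₓ(f_y(k_z A))`,
`fₓ(f_y(i_z A)) = kₓ(f_y(i_z A))`, `fₓ(f_y(f_z A)) = kₓ(f_y(f_z A))`; and if
`x ≤ y` these sets equal `f_y(k_z A)`, `f_y(i_z A)`, `f_y(f_z A)` respectively. -/
theorem stmt_12 {X : Type*} {n : ℕ} (τ : Fin n → TopologicalSpace X)
    (hord : OrderedTop τ) (hsat : SaturatedTop τ) (x y z : Fin n) (A : Set X) :
    (@frontier X (τ x) (@frontier X (τ y) (@closure X (τ z) A)) =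
        @closure X (τ x) (@frontier X (τ y) (@closure X (τ z) A))) ∧
      (@frontier X (τ x) (@frontier X (τ y) (@interior X (τ z) A)) =
        @closure X (τ x) (@frontier X (τ y) (@interior X (τ z) A))) ∧
      (@frontier X (τ x) (@frontier X (τ y) (@frontier X (τ z) A)) =
        @closure X (τ x) (@frontier X (τ y) (@frontier X (τ z) A))) ∧
      (x ≤ y →
        @frontier X (τ x) (@frontier X (τ y) (@closure X (τ z) A)) =
            @frontier X (τ y) (@closure X (τ z) A) ∧
          @frontier X (τ x) (@frontier X (τ y) (@interior X (τ z) A)) =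
            @frontier X (τ y) (@interior X (τ z) A) ∧
          @frontier X (τ x) (@frontier X (τ y) (@frontier X (τ z) A)) =
            @frontier X (τ y) (@frontier X (τ z) A)) := by
  have hk := keyMain τ hord hsat x y z (@closure X (τ z) A)
    (Or.inr (@isClosed_closure X (τ z) _).isOpen_compl)
  have hi := keyMain τ hord hsat x y z (@interior X (τ z) A)
    (Or.inl (@isOpen_interior X (τ z) _))
  have hf := keyMain τ hord hsat x y z (@frontier X (τ z) A)
    (Or.inr (@isClosed_frontier X (τ z) _).isOpen_compl)
  exact ⟨hk.1, hi.1, hf.1, fun hxy => ⟨hk.2 hxy, hi.2 hxy, hf.2 hxy⟩⟩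
end
end

section
/- (FKFK/FKFI Lemma) Let (X, τ₁, …, τₙ) be a saturated n-topological space. Then for all 1 ≤ x, y, z, w ≤ n and every subset A ⊆ X, f_x(k_y(f_z(k_w A))) = k_{max(x,y)}(f_z(k_w A)) and f_x(k_y(f_z(i_w A))) = k_{max(x,y)}(f_z(i_w A)). -/
open Set

noncomputable section

section wrappers
variable {X : Type*} (t : TopologicalSpace X) (s u : Set X)

lemma my_int_open : t.IsOpen (@interior X t s) := by letI := t; exact isOpen_interior
lemma my_int_sub : @interior X t s ⊆ s := by letI := t; exact interior_subset
lemma my_int_mono (h : s ⊆ u) : @interior X t s ⊆ @interior X t u := by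
  letI := t; exact interior_mono h
lemma my_int_max (h : s ⊆ u) (ho : t.IsOpen s) : s ⊆ @interior X t u := by
  letI := t; exact interior_maximal h ho
lemma my_cl_mem {x : X} : x ∈ @closure X t s ↔ ∀ o, t.IsOpen o → x ∈ o → (o ∩ s).Nonempty := by
  letI := t; exact mem_closure_iff
lemma my_inter_open (h1 : t.IsOpen s) (h2 : t.IsOpen u) : t.IsOpen (s ∩ u) := by
  letI := t; exact IsOpen.inter h1 h2
lemma my_cl_closed : @IsClosed X t (@closure X t s) := by letI := t; exact isClosed_closure
lemma my_sub_cl : s ⊆ @closure X t s := by letI := t; exact subset_closure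
lemma my_cl_min (h : s ⊆ u) (hc : @IsClosed X t u) : @closure X t s ⊆ u := by
  letI := t; exact closure_minimal h hc
lemma my_cl_eq (hc : @IsClosed X t s) : @closure X t s = s := by
  letI := t; exact hc.closure_eq
lemma my_cl_mono (h : s ⊆ u) : @closure X t s ⊆ @closure X t u := by
  letI := t; exact closure_mono h
lemma my_cl_cl : @closure X t (@closure X t s) = @closure X t s := by
  letI := t; exact closure_closure
lemma my_fr_closed : @IsClosed X t (@frontier X t s) := by letI := t; exact isClosed_frontier
lemma my_fr_eq : @frontier X t s = @closure X t s \ @interior X t s := rfl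
lemma my_fr_compl : @frontier X t sᶜ = @frontier X t s := by letI := t; exact frontier_compl s
lemma my_compl_open (hc : @IsClosed X t s) : t.IsOpen sᶜ := by letI := t; exact hc.isOpen_compl
lemma my_closed_of_compl (ho : t.IsOpen sᶜ) : @IsClosed X t s := by
  letI := t; exact isOpen_compl_iff.mp ho
end wrappers

lemma aux1 {X : Type*} {n : ℕ} (τ : Fin n → TopologicalSpace X)
    (hord : OrderedTop τ) (hsat : SaturatedTop τ) (z w j : Fin n)
    (U : Set X) (hU : (τ w).IsOpen U) :
    @interior X (τ j) (@frontier X (τ z) U) = ∅ := by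
  by_contra h
  have hVne : (@interior X (τ j) (@frontier X (τ z) U)).Nonempty :=
    Set.nonempty_iff_ne_empty.mpr h
  obtain ⟨p, hp⟩ := hsat j z _ (my_int_open (τ j) _) hVne
  set W := @interior X (τ z) (@interior X (τ j) (@frontier X (τ z) U)) with hWdef
  have hWopen : (τ z).IsOpen W := my_int_open (τ z) _
  have hWsub : W ⊆ @frontier X (τ z) U :=
    (my_int_sub (τ z) _).trans (my_int_sub (τ j) _)
  have hpcl : p ∈ @closure X (τ z) U := by
    have := hWsub hp; rw [my_fr_eq] at this; exact this.1
  have hWU : (W ∩ U).Nonempty := (my_cl_mem (τ z) U).mp hpcl W hWopen hp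
  have hWUopen : (τ (min z w)).IsOpen (W ∩ U) :=
    my_inter_open _ _ _ (hord (min z w) z (min_le_left _ _) _ hWopen)
      (hord (min z w) w (min_le_right _ _) _ hU)
  obtain ⟨q, hq⟩ := hsat (min z w) z _ hWUopen hWU
  have hq' : q ∈ @interior X (τ z) U :=
    my_int_mono (τ z) _ _ Set.inter_subset_right hq
  have hqf : q ∈ @frontier X (τ z) U := hWsub ((my_int_sub (τ z) _) hq).1
  rw [my_fr_eq] at hqf
  exact hqf.2 hq'

lemma aux2 {X : Type*} {n : ℕ} (τ : Fin n → TopologicalSpace X)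
    (hord : OrderedTop τ) (hsat : SaturatedTop τ) (z x y : Fin n)
    (S : Set X) (hS : @IsClosed X (τ z) S) (hint : @interior X (τ y) S = ∅) :
    @interior X (τ x) (@closure X (τ y) S) = ∅ := by
  by_contra h
  have hVne : (@interior X (τ x) (@closure X (τ y) S)).Nonempty :=
    Set.nonempty_iff_ne_empty.mpr h
  obtain ⟨p, hp⟩ := hsat x y _ (my_int_open (τ x) _) hVne
  set W := @interior X (τ y) (@interior X (τ x) (@closure X (τ y) S)) with hWdef
  have hWopen : (τ y).IsOpen W := my_int_open (τ y) _
  have hWsub : W ⊆ @closure X (τ y) S :=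
    (my_int_sub (τ y) _).trans (my_int_sub (τ x) _)
  rcases Set.eq_empty_or_nonempty (W ∩ Sᶜ) with hcase | hcase
  · have hWS : W ⊆ S := by
      intro a ha
      by_contra hna
      exact Set.eq_empty_iff_forall_notMem.mp hcase a ⟨ha, hna⟩
    have : p ∈ @interior X (τ y) S := my_int_max (τ y) _ _ hWS hWopen hp
    simp [hint] at this
  · have hopen : (τ (min y z)).IsOpen (W ∩ Sᶜ) :=
      my_inter_open _ _ _ (hord (min y z) y (min_le_left _ _) _ hWopen)
        (hord (min y z) z (min_le_right _ _) _ (my_compl_open (τ z) _ hS))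
    obtain ⟨q, hq⟩ := hsat (min y z) y _ hopen hcase
    have hqW : q ∈ W := ((my_int_sub (τ y) _) hq).1
    obtain ⟨r, hr⟩ := (my_cl_mem (τ y) S).mp (hWsub hqW) _ (my_int_open (τ y) _) hq
    exact ((my_int_sub (τ y) _) hr.1).2 hr.2

lemma aux3 {X : Type*} {n : ℕ} (τ : Fin n → TopologicalSpace X)
    (hord : OrderedTop τ) (x y : Fin n) (S : Set X) :
    @closure X (τ x) (@closure X (τ y) S) = @closure X (τ (max x y)) S := by
  rcases le_total x y with hxy | hyx
  · rw [max_eq_right hxy]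
    exact my_cl_eq (τ x) _ (my_closed_of_compl (τ x) _
      (hord x y hxy _ (my_compl_open (τ y) _ (my_cl_closed (τ y) S))))
  · rw [max_eq_left hyx]
    apply Set.Subset.antisymm
    · have h1 : @closure X (τ y) S ⊆ @closure X (τ x) S :=
        my_cl_min (τ y) _ _ (my_sub_cl (τ x) _) (my_closed_of_compl (τ y) _
          (hord y x hyx _ (my_compl_open (τ x) _ (my_cl_closed (τ x) S))))
      calc @closure X (τ x) (@closure X (τ y) S)
          ⊆ @closure X (τ x) (@closure X (τ x) S) := my_cl_mono (τ x) _ _ h1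
        _ = @closure X (τ x) S := my_cl_cl (τ x) _
    · exact my_cl_mono (τ x) _ _ (my_sub_cl (τ y) _)

lemma aux4 {X : Type*} {n : ℕ} (τ : Fin n → TopologicalSpace X)
    (hord : OrderedTop τ) (hsat : SaturatedTop τ) (x y z w : Fin n)
    (U : Set X) (hU : (τ w).IsOpen U) :
    @frontier X (τ x) (@closure X (τ y) (@frontier X (τ z) U)) =
      @closure X (τ (max x y)) (@frontier X (τ z) U) := by
  rw [my_fr_eq,
    aux2 τ hord hsat z x y _ (my_fr_closed (τ z) U) (aux1 τ hord hsat z w y U hU),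
    Set.diff_empty, aux3 τ hord x y]


/-- FKFK/FKFI Lemma: in a saturated `n`-topological space, for all
indices `x, y, z, w` and all `A ⊆ X`:
`fₓ(k_y(f_z(k_w A))) = k_{max(x,y)}(f_z(k_w A))` and
`fₓ(k_y(f_z(i_w A))) = k_{max(x,y)}(f_z(i_w A))`. -/
theorem stmt_13 {X : Type*} {n : ℕ} (τ : Fin n → TopologicalSpace X)
    (hord : OrderedTop τ) (hsat : SaturatedTop τ) (x y z w : Fin n) (A : Set X) :
    (@frontier X (τ x) (@closure X (τ y) (@frontier X (τ z) (@closure X (τ w) A))) =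
        @closure X (τ (max x y)) (@frontier X (τ z) (@closure X (τ w) A))) ∧
      (@frontier X (τ x) (@closure X (τ y) (@frontier X (τ z) (@interior X (τ w) A))) =
        @closure X (τ (max x y)) (@frontier X (τ z) (@interior X (τ w) A))) := by
  constructor
  · have h1 := aux4 τ hord hsat x y z w (@closure X (τ w) A)ᶜ
      (my_compl_open (τ w) _ (my_cl_closed (τ w) A))
    rwa [my_fr_compl] at h1
  · exact aux4 τ hord hsat x y z w _ (my_int_open (τ w) A)
end
end

section
/- Let (X, τ₁, τ₂) be a saturated 2-topological space (so τ₁ ⊇ τ₂). Then for every subset A ⊆ X: f₁(i₁ A) ⊆ f₁(i₂ A); f₁(k₁ A) ⊆ f₁(k₂ A); and f₁(k₂ A) ⊆ f₁(f₂ A). -/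
open Set

noncomputable section

section Aux
variable {Y : Type*} (t : TopologicalSpace Y) {s u : Set Y}

lemma aux_int_sub : @interior Y t s ⊆ s := by letI := t; exact interior_subset
lemma aux_sub_cl : s ⊆ @closure Y t s := by letI := t; exact subset_closure
lemma aux_int_open : t.IsOpen (@interior Y t s) := by letI := t; exact isOpen_interior
lemma aux_cl_closed : @IsClosed Y t (@closure Y t s) := by letI := t; exact isClosed_closure
lemma aux_int_max (h : u ⊆ s) (ho : t.IsOpen u) : u ⊆ @interior Y t s := by
  letI := t; exact interior_maximal h ho
lemma aux_cl_min (h : s ⊆ u) (hc : @IsClosed Y t u) : @closure Y t s ⊆ u := by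
  letI := t; exact closure_minimal h hc
lemma aux_int_mono (h : s ⊆ u) : @interior Y t s ⊆ @interior Y t u := by
  letI := t; exact interior_mono h
lemma aux_cl_mono (h : s ⊆ u) : @closure Y t s ⊆ @closure Y t u := by
  letI := t; exact closure_mono h
lemma aux_cl_cl : @closure Y t (@closure Y t s) = @closure Y t s := by
  letI := t; exact closure_closure
lemma aux_int_int : @interior Y t (@interior Y t s) = @interior Y t s := by
  letI := t; exact interior_interior
lemma aux_mem_cl_iff {x : Y} :
    x ∈ @closure Y t s ↔ ∀ U : Set Y, t.IsOpen U → x ∈ U → (U ∩ s).Nonempty := by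
  letI := t; exact mem_closure_iff
lemma aux_closed_of_open_compl (h : t.IsOpen sᶜ) : @IsClosed Y t s := by
  letI := t; exact isOpen_compl_iff.mp h
lemma aux_open_compl_of_closed (h : @IsClosed Y t s) : t.IsOpen sᶜ := by
  letI := t; exact h.isOpen_compl
lemma aux_cl_eq (h : @IsClosed Y t s) : @closure Y t s = s := by
  letI := t; exact h.closure_eq
lemma aux_open_inter {v w : Set Y} (h1 : t.IsOpen v) (h2 : t.IsOpen w) :
    t.IsOpen (v ∩ w) := by letI := t; exact IsOpen.inter h1 h2
lemma aux_fr_eq : @frontier Y t s = @closure Y t s \ @interior Y t s := by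
  letI := t; exact rfl

end Aux

/-- in a saturated 2-topological space (τ₁ ⊇ τ₂), for every `A ⊆ X`:
`f₁(i₁ A) ⊆ f₁(i₂ A)`, `f₁(k₁ A) ⊆ f₁(k₂ A)`, and `f₁(k₂ A) ⊆ f₁(f₂ A)`. -/
theorem stmt_15 {X : Type*} (t1 t2 : TopologicalSpace X)
    (hord : ∀ U : Set X, t2.IsOpen U → t1.IsOpen U) (hsat : Saturated2 t1 t2)
    (A : Set X) :
    @frontier X t1 (@interior X t1 A) ⊆ @frontier X t1 (@interior X t2 A) ∧
      @frontier X t1 (@closure X t1 A) ⊆ @frontier X t1 (@closure X t2 A) ∧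
      @frontier X t1 (@closure X t2 A) ⊆ @frontier X t1 (@frontier X t2 A) := by
  have hsub : @interior X t2 A ⊆ @interior X t1 A :=
    aux_int_max t1 (aux_int_sub t2) (hord _ (aux_int_open t2))
  have hk2closed : @IsClosed X t1 (@closure X t2 A) :=
    aux_closed_of_open_compl t1 (hord _ (aux_open_compl_of_closed t2 (aux_cl_closed t2)))
  have hk12 : @closure X t1 A ⊆ @closure X t2 A :=
    aux_cl_min t1 (aux_sub_cl t2) hk2closed
  -- interior (t1) of closure (t2) A is contained in closure (t1) A
  have hikc : @interior X t1 (@closure X t2 A) ⊆ @closure X t1 A := by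
    intro y hy
    rw [aux_mem_cl_iff t1]
    intro U hU hyU
    have hW : t1.IsOpen (U ∩ @interior X t1 (@closure X t2 A)) :=
      aux_open_inter t1 hU (aux_int_open t1)
    obtain ⟨_, hW2⟩ := hsat _ (Or.inl hW) ⟨y, hyU, hy⟩
    obtain ⟨z, hz⟩ := hW2
    have hz' : z ∈ U ∩ @interior X t1 (@closure X t2 A) := aux_int_sub t2 hz
    have hzk : z ∈ @closure X t2 A := aux_int_sub t1 hz'.2
    rw [aux_mem_cl_iff t2] at hzk
    obtain ⟨w, hw1, hw2⟩ := hzk _ (aux_int_open t2) hz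
    exact ⟨w, (aux_int_sub t2 hw1).1, hw2⟩
  refine ⟨?_, ?_, ?_⟩
  · -- f₁(i₁ A) ⊆ f₁(i₂ A)
    intro x hx
    rw [aux_fr_eq t1] at hx ⊢
    obtain ⟨hx1, hx2⟩ := hx
    rw [aux_int_int t1] at hx2
    refine ⟨?_, ?_⟩
    · have h1 : @interior X t1 A ⊆ @closure X t1 (@interior X t2 A) := by
        intro y hy
        rw [aux_mem_cl_iff t1]
        intro U hU hyU
        have hW : t1.IsOpen (U ∩ @interior X t1 A) := aux_open_inter t1 hU (aux_int_open t1)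
        obtain ⟨_, hW2⟩ := hsat _ (Or.inl hW) ⟨y, hyU, hy⟩
        obtain ⟨z, hz⟩ := hW2
        have hz' : z ∈ U ∩ @interior X t1 A := aux_int_sub t2 hz
        refine ⟨z, hz'.1, ?_⟩
        exact aux_int_mono t2 (fun w hw => aux_int_sub t1 hw.2) hz
      have h2 := aux_cl_mono t1 h1 hx1
      rwa [aux_cl_cl t1] at h2
    · intro hc
      exact hx2 (aux_int_mono t1 (aux_int_sub t2) hc)
  · -- f₁(k₁ A) ⊆ f₁(k₂ A)
    intro x hx
    rw [aux_fr_eq t1] at hx ⊢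
    obtain ⟨hx1, hx2⟩ := hx
    rw [aux_cl_cl t1] at hx1
    refine ⟨aux_sub_cl t1 (hk12 hx1), ?_⟩
    intro hc
    exact hx2 (aux_int_max t1 hikc (aux_int_open t1) hc)
  · -- f₁(k₂ A) ⊆ f₁(f₂ A)
    intro x hx
    rw [aux_fr_eq t1] at hx ⊢
    obtain ⟨hx1, hx2⟩ := hx
    rw [aux_cl_eq t1 hk2closed] at hx1
    refine ⟨?_, ?_⟩
    · rw [aux_mem_cl_iff t1]
      intro U hU hxU
      by_contra hemp
      rw [Set.not_nonempty_iff_eq_empty] at hemp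
      have hxint : x ∈ @interior X t2 A := by
        by_contra hxi
        exact Set.eq_empty_iff_forall_notMem.1 hemp x
          ⟨hxU, by rw [aux_fr_eq t2]; exact ⟨hx1, hxi⟩⟩
      have hV : t1.IsOpen (U ∩ @interior X t2 A) := aux_open_inter t1 hU (hord _ (aux_int_open t2))
      have hVsub : U ∩ @interior X t2 A ⊆ @closure X t2 A := fun z hz =>
        aux_sub_cl t2 (aux_int_sub t2 hz.2)
      exact hx2 (aux_int_max t1 hVsub hV ⟨hxU, hxint⟩)
    · intro hc
      refine hx2 (aux_int_mono t1 ?_ hc)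
      rw [aux_fr_eq t2]
      exact fun z hz => hz.1
end
end

section
/- Let (X, τ₁, τ₂) be a saturated 2-topological space (so τ₁ ⊇ τ₂). Then for every subset A ⊆ X and any choices of indices in place of the stars (which are irrelevant by saturation): f₁(k₁(i_* A)) ⊆ f₁(i₂(k_*(i_* A))) and f₁(i₁(k_* A)) ⊆ f₁(k₂(i_*(k_* A))); explicitly, f₁(k₁(i₁ A)) ⊆ f₁(i₂(k₂(i₂ A))) and f₁(i₁(k₁ A)) ⊆ f₁(k₂(i₂(k₂ A))). -/
open Set

noncomputable section

section Aux

variable {X : Type*} {t1 t2 : TopologicalSpace X}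

lemma aux_open_of_mem (hord : ∀ U : Set X, t2.IsOpen U → t1.IsOpen U)
    {s : TopologicalSpace X} (hs : s = t1 ∨ s = t2) {U : Set X} (hU : s.IsOpen U) :
    t1.IsOpen U := by
  rcases hs with rfl | rfl
  · exact hU
  · exact hord U hU

lemma aux_int_sub_s16 (hord : ∀ U : Set X, t2.IsOpen U → t1.IsOpen U)
    {s : TopologicalSpace X} (hs : s = t1 ∨ s = t2) (A : Set X) :
    @interior X s A ⊆ @interior X t1 A :=
  @interior_maximal X t1 A (@interior X s A) (@interior_subset X s A)
    (aux_open_of_mem hord hs (@isOpen_interior X s A))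

lemma aux_cl_sub (hord : ∀ U : Set X, t2.IsOpen U → t1.IsOpen U)
    {s : TopologicalSpace X} (hs : s = t1 ∨ s = t2) (A : Set X) :
    @closure X t1 A ⊆ @closure X s A := by
  have hcl : @IsClosed X t1 (@closure X s A) :=
    @IsClosed.mk X t1 (@closure X s A)
      (aux_open_of_mem hord hs (@isClosed_closure X s A).isOpen_compl)
  exact @closure_minimal X t1 A (@closure X s A) (@subset_closure X s A) hcl

/-- Key lemma: `k_t (i_s A) = k_t (i₁ A)` for `t, s ∈ {τ₁, τ₂}`. -/
lemma aux_KI (hord : ∀ U : Set X, t2.IsOpen U → t1.IsOpen U) (hsat : Saturated2 t1 t2)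
    {t s : TopologicalSpace X} (ht : t = t1 ∨ t = t2) (hs : s = t1 ∨ s = t2) (A : Set X) :
    @closure X t (@interior X s A) = @closure X t (@interior X t1 A) := by
  refine subset_antisymm (@closure_mono X t _ _ (aux_int_sub_s16 hord hs A)) ?_
  refine @closure_minimal X t _ _ ?_ (@isClosed_closure X t _)
  intro z hz
  rw [@mem_closure_iff X t z _]
  intro o ho hzo
  have hW : t1.IsOpen (o ∩ @interior X t1 A) :=
    @IsOpen.inter X t1 _ _ (aux_open_of_mem hord ht ho) (@isOpen_interior X t1 A)
  have hWne : (o ∩ @interior X t1 A).Nonempty := ⟨z, hzo, hz⟩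
  have hWA : o ∩ @interior X t1 A ⊆ A :=
    (Set.inter_subset_right).trans (@interior_subset X t1 A)
  have hint := hsat _ (Or.inl hW) hWne
  have hsub1 : @interior X s (o ∩ @interior X t1 A) ⊆ o :=
    (@interior_subset X s _).trans Set.inter_subset_left
  have hsub2 : @interior X s (o ∩ @interior X t1 A) ⊆ @interior X s A :=
    @interior_mono X s _ A hWA
  rcases hs with rfl | rfl
  · obtain ⟨w, hw⟩ := hint.1
    exact ⟨w, hsub1 hw, hsub2 hw⟩
  · obtain ⟨w, hw⟩ := hint.2
    exact ⟨w, hsub1 hw, hsub2 hw⟩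

/-- Dual key lemma: `i_t (k_s A) = i_t (k₁ A)` for `t, s ∈ {τ₁, τ₂}`. -/
lemma aux_IK (hord : ∀ U : Set X, t2.IsOpen U → t1.IsOpen U) (hsat : Saturated2 t1 t2)
    {t s : TopologicalSpace X} (ht : t = t1 ∨ t = t2) (hs : s = t1 ∨ s = t2) (A : Set X) :
    @interior X t (@closure X s A) = @interior X t (@closure X t1 A) := by
  have h1 : @closure X s A = (@interior X s Aᶜ)ᶜ := by
    rw [@interior_compl X s A, compl_compl]
  have h2 : @closure X t1 A = (@interior X t1 Aᶜ)ᶜ := by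
    rw [@interior_compl X t1 A, compl_compl]
  rw [h1, h2, @interior_compl X t (@interior X s Aᶜ),
    @interior_compl X t (@interior X t1 Aᶜ), aux_KI hord hsat ht hs]

lemma aux_cl_int_cl (t : TopologicalSpace X) {U : Set X} (hU : t.IsOpen U) :
    @closure X t (@interior X t (@closure X t U)) = @closure X t U := by
  refine subset_antisymm
    (@closure_minimal X t _ _ (@interior_subset X t _) (@isClosed_closure X t _)) ?_
  exact @closure_mono X t _ _
    (@interior_maximal X t (@closure X t U) U (@subset_closure X t U) hU)

lemma aux_int_cl_int (t : TopologicalSpace X) {C : Set X} (hC : @IsClosed X t C) :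
    @interior X t (@closure X t (@interior X t C)) = @interior X t C := by
  have h1 : @closure X t (@interior X t C) ⊆ C :=
    @closure_minimal X t (@interior X t C) C (@interior_subset X t C) hC
  exact subset_antisymm (@interior_mono X t (@closure X t (@interior X t C)) C h1)
    (@interior_maximal X t (@closure X t (@interior X t C)) (@interior X t C)
      (@subset_closure X t (@interior X t C)) (@isOpen_interior X t C))

end Aux

/-- in a saturated 2-topological space (τ₁ ⊇ τ₂), for every `A ⊆ X`
and any choices of topologies `s1, s2, s3 ∈ {τ₁, τ₂}` in the starred positions:
`f₁(k₁(i_* A)) ⊆ f₁(i₂(k_*(i_* A)))` and `f₁(i₁(k_* A)) ⊆ f₁(k₂(i_*(k_* A)))`;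
in particular `f₁(k₁(i₁ A)) ⊆ f₁(i₂(k₂(i₂ A)))` and
`f₁(i₁(k₁ A)) ⊆ f₁(k₂(i₂(k₂ A)))`. -/
theorem stmt_16 {X : Type*} (t1 t2 : TopologicalSpace X)
    (hord : ∀ U : Set X, t2.IsOpen U → t1.IsOpen U) (hsat : Saturated2 t1 t2)
    (A : Set X) :
    (∀ s1 s2 s3 : TopologicalSpace X,
        s1 ∈ ({t1, t2} : Set (TopologicalSpace X)) →
        s2 ∈ ({t1, t2} : Set (TopologicalSpace X)) →
        s3 ∈ ({t1, t2} : Set (TopologicalSpace X)) →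
        @frontier X t1 (@closure X t1 (@interior X s1 A)) ⊆
          @frontier X t1 (@interior X t2 (@closure X s2 (@interior X s3 A)))) ∧
      (∀ s1 s2 s3 : TopologicalSpace X,
        s1 ∈ ({t1, t2} : Set (TopologicalSpace X)) →
        s2 ∈ ({t1, t2} : Set (TopologicalSpace X)) →
        s3 ∈ ({t1, t2} : Set (TopologicalSpace X)) →
        @frontier X t1 (@interior X t1 (@closure X s1 A)) ⊆
          @frontier X t1 (@closure X t2 (@interior X s2 (@closure X s3 A)))) := by
  constructor
  · intro s1 s2 s3 hs1 hs2 hs3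
    have hs1' : s1 = t1 ∨ s1 = t2 := by simpa using hs1
    have hs2' : s2 = t1 ∨ s2 = t2 := by simpa using hs2
    have hs3' : s3 = t1 ∨ s3 = t2 := by simpa using hs3
    have hL : @closure X t1 (@interior X s1 A) = @closure X t1 (@interior X t1 A) :=
      aux_KI hord hsat (Or.inl rfl) hs1' A
    have hR : @interior X t2 (@closure X s2 (@interior X s3 A))
        = @interior X t2 (@closure X t1 (@interior X t1 A)) := by
      rw [aux_KI hord hsat hs2' hs3' A,
        aux_IK hord hsat (Or.inr rfl) hs2' (@interior X t1 A)]
    rw [hL, hR]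
    have hkD : @closure X t1 (@interior X t2 (@closure X t1 (@interior X t1 A)))
        = @closure X t1 (@interior X t1 A) := by
      rw [aux_KI hord hsat (Or.inl rfl) (Or.inr rfl) (@closure X t1 (@interior X t1 A)),
        aux_cl_int_cl t1 (@isOpen_interior X t1 A)]
    have hDopen : t1.IsOpen (@interior X t2 (@closure X t1 (@interior X t1 A))) :=
      hord _ (@isOpen_interior X t2 (@closure X t1 (@interior X t1 A)))
    have hiD : @interior X t1 (@interior X t2 (@closure X t1 (@interior X t1 A)))
        = @interior X t2 (@closure X t1 (@interior X t1 A)) :=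
      @IsOpen.interior_eq X t1 _ hDopen
    have hDsub : @interior X t2 (@closure X t1 (@interior X t1 A))
        ⊆ @interior X t1 (@closure X t1 (@interior X t1 A)) :=
      aux_int_sub_s16 hord (Or.inr rfl) _
    have hclB : @closure X t1 (@closure X t1 (@interior X t1 A))
        = @closure X t1 (@interior X t1 A) :=
      @IsClosed.closure_eq X t1 _ (@isClosed_closure X t1 _)
    intro x hx
    refine ⟨?_, ?_⟩
    · rw [hkD, ← hclB]
      exact hx.1
    · rw [hiD]
      exact fun hxD => hx.2 (hDsub hxD)
  · intro s1 s2 s3 hs1 hs2 hs3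
    have hs1' : s1 = t1 ∨ s1 = t2 := by simpa using hs1
    have hs2' : s2 = t1 ∨ s2 = t2 := by simpa using hs2
    have hs3' : s3 = t1 ∨ s3 = t2 := by simpa using hs3
    have hL : @interior X t1 (@closure X s1 A) = @interior X t1 (@closure X t1 A) :=
      aux_IK hord hsat (Or.inl rfl) hs1' A
    have hR : @closure X t2 (@interior X s2 (@closure X s3 A))
        = @closure X t2 (@interior X t1 (@closure X t1 A)) := by
      rw [aux_IK hord hsat hs2' hs3' A,
        aux_KI hord hsat (Or.inr rfl) hs2' (@closure X t1 A)]
    rw [hL, hR]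
    have hiE : @interior X t1 (@closure X t2 (@interior X t1 (@closure X t1 A)))
        = @interior X t1 (@closure X t1 A) := by
      rw [aux_IK hord hsat (Or.inl rfl) (Or.inr rfl) (@interior X t1 (@closure X t1 A)),
        aux_int_cl_int t1 (@isClosed_closure X t1 A)]
    have hEclosed : @IsClosed X t1 (@closure X t2 (@interior X t1 (@closure X t1 A))) :=
      @IsClosed.mk X t1 _ (hord _ (@isClosed_closure X t2 _).isOpen_compl)
    have hkE : @closure X t1 (@closure X t2 (@interior X t1 (@closure X t1 A)))
        = @closure X t2 (@interior X t1 (@closure X t1 A)) :=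
      @IsClosed.closure_eq X t1 _ hEclosed
    have hVsub : @closure X t1 (@interior X t1 (@closure X t1 A))
        ⊆ @closure X t2 (@interior X t1 (@closure X t1 A)) :=
      aux_cl_sub hord (Or.inr rfl) _
    have hVopen : @interior X t1 (@interior X t1 (@closure X t1 A))
        = @interior X t1 (@closure X t1 A) :=
      @IsOpen.interior_eq X t1 _ (@isOpen_interior X t1 _)
    intro x hx
    refine ⟨?_, ?_⟩
    · rw [hkE]
      exact hVsub hx.1
    · rw [hiE]
      exact fun hxV => hx.2 (by rw [hVopen]; exact hxV)
end
end

section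
/- Consider the real line X = ℝ equipped with τ₁ = the Sorgenfrey (lower-limit) topology, generated by the half-open intervals [a, b), and τ₂ = the usual Euclidean topology. There exists a subset A ⊆ ℝ which exhibits the natural partial order on KF₂⁰ exactly: for all operators o₁, o₂ ∈ KF₂⁰, one has o₁A ⊆ o₂A if and only if o₁B ⊆ o₂B for every subset B ⊆ ℝ. -/
open Set

noncomputable section

/-- The Sorgenfrey (lower-limit) topology on `ℝ`, generated by the half-open
intervals `[a, b)`. -/
def sorgenfrey : TopologicalSpace ℝ :=
  TopologicalSpace.generateFrom {S : Set ℝ | ∃ a b : ℝ, S = Set.Ico a b}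

/-- The usual Euclidean topology on `ℝ`. -/
def euclidean : TopologicalSpace ℝ := inferInstance

namespace Stmt19

open TopologicalSpace

/- ## Locality of closure, interior, frontier -/
section LocalLemmas
variable {X : Type*} [TopologicalSpace X] {U : Set X}

lemma closure_local (hU : IsOpen U) (B : Set X) :
    closure B ∩ U = closure (B ∩ U) ∩ U := by
  apply subset_antisymm
  · intro x hx
    have h := hU.inter_closure (t := B) ⟨hx.2, hx.1⟩
    rw [inter_comm U B] at h
    exact ⟨h, hx.2⟩
  · exact inter_subset_inter_left _ (closure_mono inter_subset_left)

lemma interior_local (hU : IsOpen U) (B : Set X) :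
    interior B ∩ U = interior (B ∩ U) ∩ U := by
  apply subset_antisymm
  · intro x hx
    exact ⟨interior_maximal (inter_subset_inter_left U interior_subset)
      (isOpen_interior.inter hU) hx, hx.2⟩
  · exact inter_subset_inter_left _ (interior_mono inter_subset_left)

lemma frontier_local (hU : IsOpen U) (B : Set X) :
    frontier B ∩ U = frontier (B ∩ U) ∩ U := by
  have h1 := closure_local hU B
  have h2 : closure (B ∩ U)ᶜ ∩ U = closure Bᶜ ∩ U := by
    rw [compl_inter, closure_union, hU.isClosed_compl.closure_eq,
      union_inter_distrib_right, compl_inter_self, union_empty]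
  have haux : ∀ s t : Set X, s ∩ t ∩ U = (s ∩ U) ∩ (t ∩ U) := by
    intro s t; ext x; simp only [mem_inter_iff]; tauto
  rw [frontier_eq_closure_inter_closure, frontier_eq_closure_inter_closure,
    haux, h1, ← h2, ← haux]

end LocalLemmas

/- ## Sorgenfrey facts -/
lemma sorg_isOpen_Ico (a b : ℝ) : sorgenfrey.IsOpen (Ico a b) :=
  isOpen_generateFrom_of_mem ⟨a, b, rfl⟩

lemma sorg_of_eucl {U : Set ℝ} (h : euclidean.IsOpen U) : sorgenfrey.IsOpen U := by
  have key : ∀ x : U, ∃ b : ℝ, (x : ℝ) < b ∧ Ico (x : ℝ) b ⊆ U := by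
    rintro ⟨x, hx⟩
    obtain ⟨ε, hε, hb⟩ := Metric.isOpen_iff.mp h x hx
    refine ⟨x + ε, by linarith, fun y hy => hb ?_⟩
    rw [Real.ball_eq_Ioo]
    exact ⟨by linarith [hy.1], hy.2⟩
  choose f hf hf2 using key
  have hU : U = ⋃ x : U, Ico (x : ℝ) (f x) := by
    apply subset_antisymm
    · intro x hx
      exact mem_iUnion.mpr ⟨⟨x, hx⟩, le_refl x, hf ⟨x, hx⟩⟩
    · exact iUnion_subset fun x => hf2 x
  rw [hU]
  exact @isOpen_iUnion ℝ _ sorgenfrey _ (fun x => sorg_isOpen_Ico _ _)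

def affEquiv (r c : ℝ) (hr : 0 < r) : ℝ ≃ ℝ where
  toFun x := r * x + c
  invFun y := (y - c) / r
  left_inv x := by field_simp; ring
  right_inv y := by field_simp; ring

lemma sorgAff_cont (r c : ℝ) (hr : 0 < r) :
    @Continuous ℝ ℝ sorgenfrey sorgenfrey (fun x => r * x + c) := by
  rw [show sorgenfrey = TopologicalSpace.generateFrom
      {S : Set ℝ | ∃ a b : ℝ, S = Set.Ico a b} from rfl,
    continuous_generateFrom_iff]
  rintro s ⟨a, b, rfl⟩
  have : (fun x : ℝ => r * x + c) ⁻¹' Ico a b = Ico ((a - c) / r) ((b - c) / r) := by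
    ext x
    simp only [mem_preimage, mem_Ico, div_le_iff₀ hr, lt_div_iff₀ hr]
    constructor <;> rintro ⟨h1, h2⟩ <;> constructor <;> linarith [mul_comm x r]
  rw [this]
  exact sorg_isOpen_Ico _ _

lemma sorgAffInv_cont (r c : ℝ) (hr : 0 < r) :
    @Continuous ℝ ℝ sorgenfrey sorgenfrey (fun y => (y - c) / r) := by
  rw [show sorgenfrey = TopologicalSpace.generateFrom
      {S : Set ℝ | ∃ a b : ℝ, S = Set.Ico a b} from rfl,
    continuous_generateFrom_iff]
  rintro s ⟨a, b, rfl⟩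
  have : (fun y : ℝ => (y - c) / r) ⁻¹' Ico a b = Ico (r * a + c) (r * b + c) := by
    ext y
    simp only [mem_preimage, mem_Ico, le_div_iff₀ hr, div_lt_iff₀ hr]
    constructor <;> rintro ⟨h1, h2⟩ <;> constructor <;> linarith [mul_comm a r, mul_comm b r]
  rw [this]
  exact sorg_isOpen_Ico _ _

def sorgAff (r c : ℝ) (hr : 0 < r) : @Homeomorph ℝ ℝ sorgenfrey sorgenfrey :=
  @Homeomorph.mk ℝ ℝ sorgenfrey sorgenfrey (affEquiv r c hr)
    (sorgAff_cont r c hr) (sorgAffInv_cont r c hr)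

def euclAff (r c : ℝ) (hr : 0 < r) : @Homeomorph ℝ ℝ euclidean euclidean :=
  @Homeomorph.mk ℝ ℝ euclidean euclidean (affEquiv r c hr)
    (by show Continuous fun x : ℝ => r * x + c; continuity)
    (by show Continuous fun y : ℝ => (y - c) / r; continuity)

/- ## Words in the six generators -/
def gen : Fin 6 → Function.End (Set ℝ)
  | 0 => clOp sorgenfrey
  | 1 => intOp sorgenfrey
  | 2 => frOp sorgenfrey
  | 3 => clOp euclidean
  | 4 => intOp euclidean
  | 5 => frOp euclidean

def eW (l : List (Fin 6)) : Function.End (Set ℝ) := (l.map gen).prod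

lemma eW_cons (i : Fin 6) (l : List (Fin 6)) : eW (i :: l) = gen i * eW l := by
  simp [eW]

lemma eW_append (l1 l2 : List (Fin 6)) : eW (l1 ++ l2) = eW l1 * eW l2 := by
  simp [eW]

lemma exists_word {o : Function.End (Set ℝ)} (ho : o ∈ KF20 sorgenfrey euclidean) :
    ∃ l : List (Fin 6), eW l = o := by
  have ho' : o ∈ Submonoid.closure {clOp sorgenfrey, intOp sorgenfrey, frOp sorgenfrey,
      clOp euclidean, intOp euclidean, frOp euclidean} := ho
  clear ho
  induction ho' using Submonoid.closure_induction with
  | mem x hx =>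
    simp only [Set.mem_insert_iff, Set.mem_singleton_iff] at hx
    rcases hx with rfl | rfl | rfl | rfl | rfl | rfl
    exacts [⟨[0], by simp [eW, gen]⟩, ⟨[1], by simp [eW, gen]⟩, ⟨[2], by simp [eW, gen]⟩,
      ⟨[3], by simp [eW, gen]⟩, ⟨[4], by simp [eW, gen]⟩, ⟨[5], by simp [eW, gen]⟩]
  | one => exact ⟨[], rfl⟩
  | mul x y hx hy ihx ihy =>
    obtain ⟨l1, rfl⟩ := ihx
    obtain ⟨l2, rfl⟩ := ihy
    exact ⟨l1 ++ l2, eW_append l1 l2⟩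

/- ## Locality of words -/
def IsLocal (o : Function.End (Set ℝ)) : Prop :=
  ∀ (B U : Set ℝ), euclidean.IsOpen U → o B ∩ U = o (B ∩ U) ∩ U

lemma gen_local (i : Fin 6) : IsLocal (gen i) := by
  intro B U hU
  have hUs : sorgenfrey.IsOpen U := sorg_of_eucl hU
  fin_cases i
  · exact @closure_local ℝ sorgenfrey U hUs B
  · exact @interior_local ℝ sorgenfrey U hUs B
  · exact @frontier_local ℝ sorgenfrey U hUs B
  · exact @closure_local ℝ euclidean U hU B
  · exact @interior_local ℝ euclidean U hU B
  · exact @frontier_local ℝ euclidean U hU B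

lemma eW_local (l : List (Fin 6)) : IsLocal (eW l) := by
  induction l with
  | nil => intro B U hU; simp [eW, Function.End.one_def]
  | cons i l ih =>
    intro B U hU
    rw [eW_cons]
    calc (gen i * eW l) B ∩ U = gen i (eW l B) ∩ U := rfl
      _ = gen i (eW l B ∩ U) ∩ U := gen_local i _ _ hU
      _ = gen i (eW l (B ∩ U) ∩ U) ∩ U := by rw [ih B U hU]
      _ = gen i (eW l (B ∩ U)) ∩ U := (gen_local i (eW l (B ∩ U)) U hU).symm
      _ = (gen i * eW l) (B ∩ U) ∩ U := rfl

/- ## Words commute with positive affine maps -/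
lemma gen_image (i : Fin 6) (r c : ℝ) (hr : 0 < r) (B : Set ℝ) :
    gen i ((fun x => r * x + c) '' B) = (fun x => r * x + c) '' gen i B := by
  fin_cases i
  · exact (@Homeomorph.image_closure ℝ ℝ sorgenfrey sorgenfrey (sorgAff r c hr) B).symm
  · exact (@Homeomorph.image_interior ℝ ℝ sorgenfrey sorgenfrey (sorgAff r c hr) B).symm
  · exact (@Homeomorph.image_frontier ℝ ℝ sorgenfrey sorgenfrey (sorgAff r c hr) B).symm
  · exact (@Homeomorph.image_closure ℝ ℝ euclidean euclidean (euclAff r c hr) B).symm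
  · exact (@Homeomorph.image_interior ℝ ℝ euclidean euclidean (euclAff r c hr) B).symm
  · exact (@Homeomorph.image_frontier ℝ ℝ euclidean euclidean (euclAff r c hr) B).symm

lemma eW_image (l : List (Fin 6)) (r c : ℝ) (hr : 0 < r) (B : Set ℝ) :
    eW l ((fun x => r * x + c) '' B) = (fun x => r * x + c) '' eW l B := by
  induction l with
  | nil => rfl
  | cons i l ih =>
    rw [eW_cons]
    show gen i (eW l ((fun x => r * x + c) '' B)) = _
    rw [ih, gen_image i r c hr]
    rfl


/- ## Reduction: any counterexample can be moved into `Ioo 0 1` with witness `1/2` -/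
lemma reduce (l1 l2 : List (Fin 6)) {B : Set ℝ} {x : ℝ}
    (hx1 : x ∈ eW l1 B) (hx2 : x ∉ eW l2 B) :
    ∃ C : Set ℝ, C ⊆ Ioo 0 1 ∧ (1/2 : ℝ) ∈ eW l1 C ∧ (1/2 : ℝ) ∉ eW l2 C := by
  have hU : euclidean.IsOpen (Ioo (x-1) (x+1)) := (isOpen_Ioo : IsOpen (Ioo (x-1) (x+1)))
  have hxU : x ∈ Ioo (x-1) (x+1) := ⟨by linarith, by linarith⟩
  set B' := B ∩ Ioo (x-1) (x+1) with hB'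
  have h1 : x ∈ eW l1 B' := by
    have := eW_local l1 B (Ioo (x-1) (x+1)) hU
    have hx : x ∈ eW l1 B' ∩ Ioo (x-1) (x+1) := this ▸ ⟨hx1, hxU⟩
    exact hx.1
  have h2 : x ∉ eW l2 B' := by
    intro h
    have := (eW_local l2 B (Ioo (x-1) (x+1)) hU).symm
    have hx : x ∈ eW l2 B ∩ Ioo (x-1) (x+1) := this ▸ ⟨h, hxU⟩
    exact hx2 hx.1
  refine ⟨(fun t => (1/2 : ℝ) * t + (1-x)/2) '' B', ?_, ?_, ?_⟩
  · rintro y ⟨t, ht, rfl⟩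
    have htU : t ∈ Ioo (x-1) (x+1) := ht.2
    exact ⟨by simp only [mem_Ioo] at htU; linarith [htU.1], by
      simp only [mem_Ioo] at htU; linarith [htU.2]⟩
  · rw [eW_image l1 (1/2) ((1-x)/2) (by norm_num)]
    exact ⟨x, h1, by ring⟩
  · rw [eW_image l2 (1/2) ((1-x)/2) (by norm_num)]
    rintro ⟨t, ht, hteq⟩
    have : t = x := by
      have : (1/2 : ℝ) * t + (1-x)/2 = 1/2 := hteq
      linarith
    exact h2 (this ▸ ht)

/- ## The universal set `bigA` -/
open scoped Classical in
def Cset (p : List (Fin 6) × List (Fin 6)) : Set ℝ :=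
  if h : ∃ C : Set ℝ, C ⊆ Ioo 0 1 ∧ (1/2 : ℝ) ∈ eW p.1 C ∧ (1/2 : ℝ) ∉ eW p.2 C
  then h.choose else ∅

def Cn (n : ℕ) : Set ℝ :=
  (Encodable.decode (α := List (Fin 6) × List (Fin 6)) n).elim ∅ Cset

lemma Cset_subset (p : List (Fin 6) × List (Fin 6)) : Cset p ⊆ Ioo 0 1 := by
  unfold Cset
  classical
  split
  · rename_i h
    exact h.choose_spec.1
  · exact empty_subset _

lemma Cn_subset (n : ℕ) : Cn n ⊆ Ioo 0 1 := by
  unfold Cn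
  cases Encodable.decode (α := List (Fin 6) × List (Fin 6)) n with
  | none => exact empty_subset _
  | some p => exact Cset_subset p

def bigA : Set ℝ := ⋃ n : ℕ, (fun t : ℝ => 1 * t + 3 * (n : ℝ)) '' Cn n

lemma copy_subset (n : ℕ) :
    (fun t : ℝ => 1 * t + 3 * (n : ℝ)) '' Cn n ⊆ Ioo (3 * (n : ℝ)) (3 * (n : ℝ) + 1) := by
  rintro y ⟨t, ht, rfl⟩
  have h := Cn_subset n ht
  simp only [mem_Ioo] at h ⊢
  constructor <;> linarith [h.1, h.2]

lemma bigA_inter (n : ℕ) :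
    bigA ∩ Ioo (3 * (n : ℝ)) (3 * (n : ℝ) + 1) = (fun t : ℝ => 1 * t + 3 * (n : ℝ)) '' Cn n := by
  apply subset_antisymm
  · rintro y ⟨hy, hyU⟩
    obtain ⟨m, hm⟩ := mem_iUnion.mp hy
    obtain ⟨t, ht, rfl⟩ := hm
    have hmem := copy_subset m ⟨t, ht, rfl⟩
    simp only [mem_Ioo] at hmem hyU
    have hmn : m = n := by
      by_contra hne
      rcases Nat.lt_or_ge m n with hlt | hge
      · have : (m : ℝ) + 1 ≤ (n : ℝ) := by exact_mod_cast hlt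
        linarith [hmem.2, hyU.1]
      · have hlt : n < m := lt_of_le_of_ne hge (Ne.symm hne)
        have : (n : ℝ) + 1 ≤ (m : ℝ) := by exact_mod_cast hlt
        linarith [hmem.1, hyU.2]
    subst hmn
    exact ⟨t, ht, rfl⟩
  · intro y hy
    exact ⟨mem_iUnion.mpr ⟨n, hy⟩, copy_subset n hy⟩

end Stmt19

open Stmt19 in
/-- on `ℝ` with the Sorgenfrey topology `τ₁` and the usual topology
`τ₂`, there is a subset `A ⊆ ℝ` exhibiting the natural partial order on `KF₂⁰`
exactly: for all `o₁, o₂ ∈ KF₂⁰`, `o₁A ⊆ o₂A` iff `o₁B ⊆ o₂B` for every `B ⊆ ℝ`. -/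
theorem stmt_19 :
    ∃ A : Set ℝ, ∀ o1 o2 : Function.End (Set ℝ),
      o1 ∈ KF20 sorgenfrey euclidean → o2 ∈ KF20 sorgenfrey euclidean →
      (o1 A ⊆ o2 A ↔ ∀ B : Set ℝ, o1 B ⊆ o2 B) := by
  refine ⟨bigA, fun o1 o2 h1 h2 => ⟨?_, fun h => h bigA⟩⟩
  intro hA B
  obtain ⟨l1, rfl⟩ := exists_word h1
  obtain ⟨l2, rfl⟩ := exists_word h2
  by_contra hB
  rw [not_subset] at hB
  obtain ⟨x, hx1, hx2⟩ := hB
  have hex := reduce l1 l2 hx1 hx2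
  set n := Encodable.encode ((l1, l2) : List (Fin 6) × List (Fin 6)) with hn
  have hdec : Encodable.decode (α := List (Fin 6) × List (Fin 6)) n = some (l1, l2) :=
    Encodable.encodek _
  have hCn : Cn n = Cset (l1, l2) := by unfold Cn; rw [hdec]; rfl
  have hspec : Cn n ⊆ Ioo 0 1 ∧ (1/2 : ℝ) ∈ eW l1 (Cn n) ∧ (1/2 : ℝ) ∉ eW l2 (Cn n) := by
    rw [hCn]
    unfold Cset
    classical
    rw [dif_pos hex]
    exact hex.choose_spec
  have hU : euclidean.IsOpen (Ioo (3 * (n : ℝ)) (3 * (n : ℝ) + 1)) :=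
    (isOpen_Ioo : IsOpen (Ioo (3 * (n : ℝ)) (3 * (n : ℝ) + 1)))
  set w : ℝ := 1 * (1/2) + 3 * (n : ℝ) with hw
  have hwU : w ∈ Ioo (3 * (n : ℝ)) (3 * (n : ℝ) + 1) := by
    simp only [mem_Ioo, hw]; constructor <;> linarith
  have key : ∀ l : List (Fin 6), eW l bigA ∩ Ioo (3 * (n : ℝ)) (3 * (n : ℝ) + 1) =
      ((fun t : ℝ => 1 * t + 3 * (n : ℝ)) '' eW l (Cn n)) ∩
        Ioo (3 * (n : ℝ)) (3 * (n : ℝ) + 1) := by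
    intro l
    rw [eW_local l bigA _ hU, bigA_inter n, eW_image l 1 (3 * (n : ℝ)) one_pos]
  have hw1 : w ∈ eW l1 bigA := by
    have h : w ∈ ((fun t : ℝ => 1 * t + 3 * (n : ℝ)) '' eW l1 (Cn n)) ∩
        Ioo (3 * (n : ℝ)) (3 * (n : ℝ) + 1) := ⟨⟨1/2, hspec.2.1, rfl⟩, hwU⟩
    rw [← key l1] at h
    exact h.1
  have hw2 : w ∈ eW l2 bigA := hA hw1
  have h : w ∈ ((fun t : ℝ => 1 * t + 3 * (n : ℝ)) '' eW l2 (Cn n)) ∩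
      Ioo (3 * (n : ℝ)) (3 * (n : ℝ) + 1) := by rw [← key l2]; exact ⟨hw2, hwU⟩
  obtain ⟨⟨t, ht, hteq⟩, -⟩ := h
  have : t = 1/2 := by
    have : 1 * t + 3 * (n : ℝ) = 1 * (1/2) + 3 * (n : ℝ) := hteq
    linarith
  exact hspec.2.2 (this ▸ ht)
end
end
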